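/- Let m and n be integers greater than 1 and set p = gcd(m,n), with p > 1. Let ρ : T_{m×n} → T_{p×p} be the map induced by reduction modulo p in both coordinates. If the preimage under ρ of every line on T_{p×p} is a line on T_{m×n}, then τ(T_{m×n}) = τ(T_{p×p}). -/

import Mathlib

/-- Projection `π_{m,n} : ℤ×ℤ → (ℤ/mℤ)×(ℤ/nℤ)`. -/
def torusProj (m n : ℕ) (P : ℤ × ℤ) : ZMod m × ZMod n :=
  ((P.1 : ZMod m), (P.2 : ZMod n))

/-- `L` is a line on the discrete torus `T_{m×n}`: the image under `π_{m,n}`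
of `{(a+uk, b+vk) : k ∈ ℤ}` with `gcd(u,v)=1`. -/
def IsTorusLine (m n : ℕ) (L : Set (ZMod m × ZMod n)) : Prop :=
  ∃ a b u v : ℤ, Int.gcd u v = 1 ∧
    L = torusProj m n '' {P : ℤ × ℤ | ∃ k : ℤ, P = (a + u * k, b + v * k)}

/-- `X` satisfies the no-three-in-line condition on `T_{m×n}`:
no three distinct points of `X` lie on a common line. -/
def NoThreeInLine (m n : ℕ) (X : Set (ZMod m × ZMod n)) : Prop :=
  ∀ L : Set (ZMod m × ZMod n), IsTorusLine m n L →
    ∀ A ∈ X, ∀ B ∈ X, ∀ C ∈ X,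
      A ∈ L → B ∈ L → C ∈ L → A = B ∨ A = C ∨ B = C

/-- `τ(T_{m×n})`: the maximum cardinality of a subset of `T_{m×n}`
satisfying the no-three-in-line condition. -/
noncomputable def tau (m n : ℕ) : ℕ :=
  sSup {k : ℕ | ∃ X : Set (ZMod m × ZMod n), NoThreeInLine m n X ∧ X.ncard = k}

/-- The reduction map `ρ : T_{m×n} → T_{p×p}` (for `p ∣ m`, `p ∣ n`). -/
def torusRed (m n p : ℕ) (hm : p ∣ m) (hn : p ∣ n)
    (q : ZMod m × ZMod n) : ZMod p × ZMod p :=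
  (ZMod.castHom hm (ZMod p) q.1, ZMod.castHom hn (ZMod p) q.2)

/-- The determinant `D(A,B,C)` with rows `(1,1,1)`, x-coords, y-coords. -/
def detD (A B C : ℤ × ℤ) : ℤ :=
  Matrix.det !![1, 1, 1; A.1, B.1, C.1; A.2, B.2, C.2]

-- AUX START
lemma red_proj (m n p : ℕ) (hm : p ∣ m) (hn : p ∣ n) (P : ℤ × ℤ) :
    torusRed m n p hm hn (torusProj m n P) = torusProj p p P := by
  simp [torusRed, torusProj, map_intCast]

/-- torusProj is surjective when m, n ≠ 0. -/
lemma proj_surj (m n : ℕ) [NeZero m] [NeZero n] (q : ZMod m × ZMod n) :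
    ∃ P : ℤ × ℤ, torusProj m n P = q := by
  obtain ⟨a, ha⟩ := ZMod.intCast_surjective (n := m) q.1
  obtain ⟨b, hb⟩ := ZMod.intCast_surjective (n := n) q.2
  exact ⟨(a, b), by simp [torusProj, ha, hb]⟩

/-- Through any two points there is a line. -/
lemma exists_line_through (m n : ℕ) [NeZero m] [NeZero n] (P Q : ZMod m × ZMod n) :
    ∃ L, IsTorusLine m n L ∧ P ∈ L ∧ Q ∈ L := by
  obtain ⟨A, hA⟩ := proj_surj m n P
  obtain ⟨B, hB⟩ := proj_surj m n Q
  by_cases hd : B.1 - A.1 = 0 ∧ B.2 - A.2 = 0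
  · refine ⟨_, ⟨A.1, A.2, 1, 0, by simp, rfl⟩, ⟨A, ⟨0, by simp⟩, hA⟩,
      ⟨B, ⟨0, ?_⟩, hB⟩⟩
    obtain ⟨h1, h2⟩ := hd
    simp only [mul_zero, add_zero, zero_mul]
    exact Prod.ext (by omega) (by omega)
  · set d1 := B.1 - A.1 with hd1
    set d2 := B.2 - A.2 with hd2
    have hg : 0 < Int.gcd d1 d2 := Int.gcd_pos_iff.mpr (by tauto)
    set g : ℤ := (Int.gcd d1 d2 : ℤ) with hgdef
    have h1 : d1 / g * g = d1 := Int.ediv_mul_cancel (Int.gcd_dvd_left d1 d2)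
    have h2 : d2 / g * g = d2 := Int.ediv_mul_cancel (Int.gcd_dvd_right d1 d2)
    refine ⟨_, ⟨A.1, A.2, d1 / g, d2 / g, Int.gcd_div_gcd_div_gcd hg, rfl⟩,
      ⟨A, ⟨0, by simp⟩, hA⟩, ⟨B, ⟨g, ?_⟩, hB⟩⟩
    show B = (A.1 + d1 / g * g, A.2 + d2 / g * g)
    rw [h1, h2, hd1, hd2]
    exact Prod.ext (by ring) (by ring)

/-- ρ maps lines into lines. -/
lemma red_line (m n p : ℕ) (hm : p ∣ m) (hn : p ∣ n) (L : Set (ZMod m × ZMod n))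
    (hL : IsTorusLine m n L) :
    ∃ ℓ, IsTorusLine p p ℓ ∧ ∀ x ∈ L, torusRed m n p hm hn x ∈ ℓ := by
  obtain ⟨a, b, u, v, huv, rfl⟩ := hL
  refine ⟨torusProj p p '' {P : ℤ × ℤ | ∃ k : ℤ, P = (a + u * k, b + v * k)},
    ⟨a, b, u, v, huv, rfl⟩, ?_⟩
  rintro x ⟨P, hP, rfl⟩
  exact ⟨P, hP, (red_proj m n p hm hn P).symm⟩

/-- Sets of size ≤ 2 are no-three-in-line. -/
lemma no3_small (m n : ℕ) [NeZero m] [NeZero n] (X : Set (ZMod m × ZMod n))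
    (h2 : X.ncard ≤ 2) : NoThreeInLine m n X := by
  intro L _ A hA B hB C hC _ _ _
  by_contra hc
  push_neg at hc
  obtain ⟨hAB, hAC, hBC⟩ := hc
  have hsub : ({A, B, C} : Set (ZMod m × ZMod n)) ⊆ X := by
    intro x hx; rcases hx with rfl | rfl | rfl <;> simpa
  have h3 : ({A, B, C} : Set (ZMod m × ZMod n)).ncard = 3 := by
    rw [Set.ncard_insert_of_notMem (by simp [hAB, hAC]) (Set.toFinite _),
      Set.ncard_pair hBC]
  have := Set.ncard_le_ncard hsub (Set.toFinite X)
  omega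

/-- bound on ncard -/
lemma ncard_bdd (m n : ℕ) [NeZero m] [NeZero n] :
    BddAbove {k : ℕ | ∃ X : Set (ZMod m × ZMod n), NoThreeInLine m n X ∧ X.ncard = k} := by
  refine ⟨m * n, ?_⟩
  rintro k ⟨X, _, rfl⟩
  calc X.ncard ≤ (Set.univ : Set (ZMod m × ZMod n)).ncard :=
        Set.ncard_le_ncard (Set.subset_univ X) Set.finite_univ
    _ = m * n := by simp [Set.ncard_univ, Nat.card_eq_fintype_card]

lemma zero_mem (m n : ℕ) :
    0 ∈ {k : ℕ | ∃ X : Set (ZMod m × ZMod n), NoThreeInLine m n X ∧ X.ncard = k} :=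
  ⟨∅, fun _ _ A hA => absurd hA (by simp), by simp⟩

/-- Lemma 4.1(2): if the preimage under ρ of every line on T_{p×p}
is a line on T_{m×n}, then τ(T_{m×n}) = τ(T_{p×p}). -/
theorem tau_eq_of_preimage_lines (m n p : ℕ) (hm : 1 < m) (hn : 1 < n)
    (hpm : p ∣ m) (hpn : p ∣ n) (hgcd : Nat.gcd m n = p) (hp1 : 1 < p)
    (h : ∀ ℓ : Set (ZMod p × ZMod p), IsTorusLine p p ℓ →
      IsTorusLine m n (torusRed m n p hpm hpn ⁻¹' ℓ)) :
    tau m n = tau p p := by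
  haveI : NeZero m := ⟨by omega⟩
  haveI : NeZero n := ⟨by omega⟩
  haveI : NeZero p := ⟨by omega⟩
  haveI : Fact (1 < p) := ⟨hp1⟩
  set ρ := torusRed m n p hpm hpn with hρdef
  set Smn := {k : ℕ | ∃ X : Set (ZMod m × ZMod n), NoThreeInLine m n X ∧ X.ncard = k}
    with hSmn
  set Spp := {k : ℕ | ∃ X : Set (ZMod p × ZMod p), NoThreeInLine p p X ∧ X.ncard = k}
    with hSpp
  have h2pp : 2 ∈ Spp := by
    have hne : ((0 : ZMod p), (0 : ZMod p)) ≠ ((1 : ZMod p), (0 : ZMod p)) := by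
      simp [Prod.ext_iff]
    exact ⟨{((0 : ZMod p), (0 : ZMod p)), ((1 : ZMod p), (0 : ZMod p))},
      no3_small p p _ (le_of_eq (Set.ncard_pair hne)), Set.ncard_pair hne⟩
  -- the section σ
  set σ : (ZMod p × ZMod p) → (ZMod m × ZMod n) :=
    fun q => torusProj m n (((q.1.val : ℤ), (q.2.val : ℤ))) with hσdef
  have hρσ : ∀ q, ρ (σ q) = q := by
    intro q
    rw [hσdef, hρdef]
    simp only [red_proj]
    show (((q.1.val : ℤ) : ZMod p), ((q.2.val : ℤ) : ZMod p)) = q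
    rw [Int.cast_natCast, Int.cast_natCast, ZMod.natCast_rightInverse q.1,
      ZMod.natCast_rightInverse q.2]
  have hσinj : Function.Injective σ := fun a b hab => by
    rw [← hρσ a, ← hρσ b, hab]
  show sSup Smn = sSup Spp
  apply le_antisymm
  · -- tau m n ≤ tau p p
    apply csSup_le ⟨0, zero_mem m n⟩
    rintro k ⟨X, hX, rfl⟩
    by_cases hk2 : X.ncard ≤ 2
    · exact le_trans hk2 (le_csSup (ncard_bdd p p) h2pp)
    · push_neg at hk2
      have hinj : Set.InjOn ρ X := by
        intro A hA B hB hAB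
        by_contra hne
        have hCex : (X \ {A, B}).Nonempty := by
          rw [Set.nonempty_iff_ne_empty]
          intro hemp
          rw [Set.diff_eq_empty] at hemp
          have h1 := Set.ncard_le_ncard hemp (Set.toFinite _)
          have hp2 : ({A, B} : Set (ZMod m × ZMod n)).ncard ≤ 2 :=
            le_trans (Set.ncard_insert_le _ _) (by simp)
          omega
        obtain ⟨C, hCX, hC⟩ := hCex
        simp only [Set.mem_insert_iff, Set.mem_singleton_iff, not_or] at hC
        obtain ⟨ℓ, hℓ, hAℓ, hCℓ⟩ := exists_line_through p p (ρ A) (ρ C)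
        have hBℓ : ρ B ∈ ℓ := by rw [← hAB]; exact hAℓ
        rcases hX _ (h ℓ hℓ) A hA B hB C hCX hAℓ hBℓ hCℓ with h' | h' | h'
        · exact hne h'
        · exact hC.1 h'.symm
        · exact hC.2 h'.symm
      have hXimg : NoThreeInLine p p (ρ '' X) := by
        intro ℓ hℓ A' hA' B' hB' C' hC' hA'ℓ hB'ℓ hC'ℓ
        obtain ⟨A, hA, rfl⟩ := hA'
        obtain ⟨B, hB, rfl⟩ := hB'
        obtain ⟨C, hC, rfl⟩ := hC'
        rcases hX _ (h ℓ hℓ) A hA B hB C hC hA'ℓ hB'ℓ hC'ℓ with rfl | rfl | rfl <;> tauto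
      exact le_csSup (ncard_bdd p p) ⟨ρ '' X, hXimg, Set.ncard_image_of_injOn hinj⟩
  · -- tau p p ≤ tau m n
    apply csSup_le_csSup (ncard_bdd m n) ⟨0, zero_mem p p⟩
    rintro k ⟨Y, hY, rfl⟩
    refine ⟨σ '' Y, ?_, Set.ncard_image_of_injective Y hσinj⟩
    intro L hL A' hA' B' hB' C' hC' hA'L hB'L hC'L
    obtain ⟨a, ha, rfl⟩ := hA'
    obtain ⟨b, hb, rfl⟩ := hB'
    obtain ⟨c, hc, rfl⟩ := hC'
    obtain ⟨ℓ, hℓ, hmap⟩ := red_line m n p hpm hpn L hL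
    have haℓ : a ∈ ℓ := by have := hmap _ hA'L; rwa [← hρdef, hρσ] at this
    have hbℓ : b ∈ ℓ := by have := hmap _ hB'L; rwa [← hρdef, hρσ] at this
    have hcℓ : c ∈ ℓ := by have := hmap _ hC'L; rwa [← hρdef, hρσ] at this
    rcases hY ℓ hℓ a ha b hb c hc haℓ hbℓ hcℓ with rfl | rfl | rfl <;> tauto
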